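/- Let φ : ℝⁿ → ℝ ∪ {+∞} be differentiable at y, and suppose φ is pointwise strongly convex at y with constant μ > 0 on a convex neighborhood V of y, i.e., for all τ ∈ (0,1) and all x ∈ V, φ(τx + (1−τ)y) ≤ τφ(x) + (1−τ)φ(y) − (μ/2)τ(1−τ)‖x − y‖². Then φ is pointwise quadratically supportable at y with the same constant μ on V, i.e., φ(x) ≥ φ(y) + ⟨∇φ(y), x − y⟩ + (μ/2)‖x − y‖² for all x ∈ V. -/

import Mathlib

open scoped RealInnerProductSpace

/-- If `φ` is differentiable at `y` (with gradient `g`) and pointwise strongly convex at `y`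
with constant `μ > 0` on a convex neighborhood `V` of `y`, i.e.
`φ(τx + (1-τ)y) ≤ τ φ(x) + (1-τ) φ(y) - (μ/2) τ (1-τ) ‖x - y‖²` for all `τ ∈ (0,1)` and
`x ∈ V`, then `φ` is pointwise quadratically supportable at `y` with the same constant `μ`
on `V`: `φ(x) ≥ φ(y) + ⟪∇φ(y), x - y⟫ + (μ/2) ‖x - y‖²` for all `x ∈ V`. -/
theorem pqs_of_pointwise_strongly_convex {n : ℕ}
    (φ : EuclideanSpace ℝ (Fin n) → ℝ) (y g : EuclideanSpace ℝ (Fin n))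
    (hdiff : HasGradientAt φ g y)
    (V : Set (EuclideanSpace ℝ (Fin n))) (hV : V ∈ nhds y) (hVconv : Convex ℝ V)
    (μ : ℝ) (hμ : 0 < μ)
    (hpsc : ∀ x ∈ V, ∀ τ : ℝ, 0 < τ → τ < 1 →
      φ (τ • x + (1 - τ) • y) ≤ τ * φ x + (1 - τ) * φ y - μ / 2 * τ * (1 - τ) * ‖x - y‖ ^ 2) :
    ∀ x ∈ V, φ y + ⟪g, x - y⟫ + μ / 2 * ‖x - y‖ ^ 2 ≤ φ x := by
  intro x hx
  -- the function along the segment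
  set f : ℝ → ℝ := fun τ => φ (y + τ • (x - y)) with hf
  have hc : HasDerivAt (fun τ : ℝ => y + τ • (x - y)) (x - y) 0 := by
    simpa using ((hasDerivAt_id (0:ℝ)).smul_const (x - y)).const_add y
  have hF : HasFDerivAt φ ((InnerProductSpace.toDual ℝ _) g) (y + (0:ℝ) • (x - y)) := by
    simpa using hdiff.hasFDerivAt
  have hfd : HasDerivAt f ⟪g, x - y⟫ 0 := by
    have h := hF.comp_hasDerivAt 0 hc
    simp at h
    exact h
  have hslope : Filter.Tendsto (slope f 0) (nhdsWithin 0 (Set.Ioi 0)) (nhds ⟪g, x - y⟫) :=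
    (hasDerivAt_iff_tendsto_slope.mp hfd).mono_left
      (nhdsWithin_mono 0 (fun t ht => ne_of_gt ht))
  -- the bound on the slope for τ ∈ (0,1)
  have hbound : ∀ᶠ τ in nhdsWithin 0 (Set.Ioi 0),
      slope f 0 τ ≤ φ x - φ y - μ / 2 * (1 - τ) * ‖x - y‖ ^ 2 := by
    filter_upwards [Ioo_mem_nhdsGT_of_mem (by simp : (0:ℝ) ∈ Set.Ico 0 1)] with τ hτ
    obtain ⟨hτ0, hτ1⟩ := hτ
    have key := hpsc x hx τ hτ0 hτ1
    have heq : τ • x + (1 - τ) • y = y + τ • (x - y) := by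
      simp [smul_sub, sub_smul]; abel
    rw [heq] at key
    have : f τ - f 0 ≤ τ * (φ x - φ y - μ / 2 * (1 - τ) * ‖x - y‖ ^ 2) := by
      simp only [hf, zero_smul, add_zero]
      nlinarith [key]
    rw [slope_def_field, sub_zero, div_le_iff₀ hτ0]
    nlinarith [this]
  -- limit of RHS
  have hR : Filter.Tendsto (fun τ : ℝ => φ x - φ y - μ / 2 * (1 - τ) * ‖x - y‖ ^ 2)
      (nhdsWithin 0 (Set.Ioi 0)) (nhds (φ x - φ y - μ / 2 * ‖x - y‖ ^ 2)) := by
    have : Filter.Tendsto (fun τ : ℝ => φ x - φ y - μ / 2 * (1 - τ) * ‖x - y‖ ^ 2)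
        (nhds 0) (nhds (φ x - φ y - μ / 2 * (1 - 0) * ‖x - y‖ ^ 2)) := by
      apply Continuous.tendsto
      continuity
    simpa using this.mono_left nhdsWithin_le_nhds
  have := le_of_tendsto_of_tendsto hslope hR hbound
  linarith [this]
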